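/- Let E be an elliptic curve over a local field K_v of residue characteristic ℓ ≠ p with good reduction, and let L_w/K_v be a totally ramified cyclic extension of degree p with group G. Then dim_{𝔽_p} H^1(G, E(L_w)) = dim_{𝔽_p} Ẽ(k_v)[p], where Ẽ(k_v)[p] is the p-torsion of the reduced curve over the residue field. -/

import Mathlib

/-!
STATEMENT 9: Let `E` be an elliptic curve with good reduction over a local field `K_v`
of residue characteristic `ℓ ≠ p`, and `L_w/K_v` a totally ramified cyclic extension of
degree `p` with group `G = ⟨σ⟩`.  Then
`dim_{𝔽_p} H¹(G, E(L_w)) = dim_{𝔽_p} Ẽ(k_v)[p]`.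

Formalization: `A = E(L_w)` with the action of a generator `σ` of `G`;
`red : A →+ R` is the (surjective) reduction map onto `R = Ẽ(k_w) = Ẽ(k_v)`; total
ramification means `G` acts trivially on the residue field, i.e. `red ∘ σ = red`;
`ℓ ≠ p` means the kernel of reduction (the formal group `E₁(L_w)`) is uniquely
`p`-divisible.  Both `H¹(G,E(L_w))` and `Ẽ(k_v)[p]` are elementary abelian `p`-groups,
so equality of `𝔽_p`-dimensions is equivalent to equality of cardinalities.
-/


section CyclicCohomology

variable {A : Type*} [AddCommGroup A]

/-- The norm (trace) map of the cyclic group generated by `σ` (of order `p`):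
`a ↦ ∑_{i<p} σ^i a`. -/
def cnorm (σ : A ≃+ A) (p : ℕ) (a : A) : A := ∑ i ∈ Finset.range p, (i • (σ : AddAut A)) a

/-- 1-cocycles of the cyclic group `⟨σ⟩` (of order `p`) with values in the
`σ`-stable subgroup `B`: elements of `B` killed by the norm. -/
abbrev Z1 (σ : A ≃+ A) (p : ℕ) (B : AddSubgroup A) :=
  {a : A // a ∈ B ∧ cnorm σ p a = 0}

/-- `H¹(⟨σ⟩, B)`: 1-cocycles modulo coboundaries `σ b - b`, `b ∈ B`. -/
abbrev H1 (σ : A ≃+ A) (p : ℕ) (B : AddSubgroup A) :=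
  Quot fun x y : Z1 σ p B => ∃ b ∈ B, x.1 - y.1 = σ b - b

/-- `H²(⟨σ⟩, B)`: fixed points of `B` modulo norms of elements of `B`. -/
abbrev H2 (σ : A ≃+ A) (p : ℕ) (B : AddSubgroup A) :=
  Quot fun x y : {a : A // a ∈ B ∧ σ a = a} => ∃ b ∈ B, x.1 - y.1 = cnorm σ p b

end CyclicCohomology


namespace Selmer9
variable {A : Type*} [AddCommGroup A]

lemma pow_succ_apply (σ : A ≃+ A) (i : ℕ) (a : A) :
    ((i + 1) • (σ : AddAut A)) a = σ ((i • (σ : AddAut A)) a) := by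
  rw [succ_nsmul']; rfl

lemma cnorm_sub (σ : A ≃+ A) (p : ℕ) (x y : A) :
    cnorm σ p (x - y) = cnorm σ p x - cnorm σ p y := by
  simp [cnorm, map_sub, Finset.sum_sub_distrib]

lemma cnorm_nsmul (σ : A ≃+ A) (p n : ℕ) (x : A) :
    cnorm σ p (n • x) = n • cnorm σ p x := by
  simp [cnorm, map_nsmul, Finset.smul_sum]

lemma sigma_cnorm (σ : A ≃+ A) {p : ℕ} (hσ : p • (σ : AddAut A) = 0) (a : A) :
    σ (cnorm σ p a) = cnorm σ p a := by
  unfold cnorm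
  rw [map_sum]
  have h1 : ∀ i ∈ Finset.range p, σ ((i • (σ : AddAut A)) a) = ((i + 1) • (σ : AddAut A)) a :=
    fun i _ => (pow_succ_apply σ i a).symm
  rw [Finset.sum_congr rfl h1]
  have h2 := Finset.sum_range_succ' (fun i => (i • (σ : AddAut A)) a) p
  rw [Finset.sum_range_succ (fun i => (i • (σ : AddAut A)) a) p] at h2
  have h4 : (p • (σ : AddAut A)) a = a := by rw [hσ]; rfl
  rw [h4] at h2
  have h5 : ((0 : AddAut A)) a = a := rfl
  simp only [zero_nsmul] at h2
  rw [h5] at h2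
  exact add_right_cancel h2.symm

/-- If `σ x = x` then the norm is `p • x`. -/
lemma cnorm_fixed (σ : A ≃+ A) (p : ℕ) {x : A} (hx : σ x = x) :
    cnorm σ p x = p • x := by
  have hpow : ∀ i : ℕ, (i • (σ : AddAut A)) x = x := by
    intro i
    induction i with
    | zero => rfl
    | succ n ih => rw [pow_succ_apply, ih, hx]
  simp [cnorm, hpow]

/-- The key telescoping identity. -/
lemma key (σ : A ≃+ A) (a : A) (n : ℕ) :
    σ (∑ i ∈ Finset.range n, (i : ℤ) • (i • (σ : AddAut A)) a)
      - ∑ i ∈ Finset.range n, (i : ℤ) • (i • (σ : AddAut A)) a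
      = ((n : ℤ) - 1) • (n • (σ : AddAut A)) a + a - cnorm σ n a := by
  induction n with
  | zero => simp [cnorm]
  | succ n ih =>
      rw [Finset.sum_range_succ, map_add, map_zsmul, ← pow_succ_apply]
      unfold cnorm
      rw [Finset.sum_range_succ]
      unfold cnorm at ih
      have hrw : ((n : ℤ)) • (n • (σ : AddAut A)) a = ((n : ℤ) - 1) • (n • (σ : AddAut A)) a + (n • (σ : AddAut A)) a := by
        rw [sub_smul, one_smul]; abel
      have hrw2 : (((n : ℕ) + 1 : ℤ) - 1) • ((n + 1) • (σ : AddAut A)) a = (n : ℤ) • ((n + 1) • (σ : AddAut A)) a := by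
        norm_num
      push_cast
      rw [hrw2]
      calc σ (∑ i ∈ Finset.range n, (i : ℤ) • (i • (σ : AddAut A)) a) + (n : ℤ) • ((n + 1) • (σ : AddAut A)) a
            - (∑ i ∈ Finset.range n, (i : ℤ) • (i • (σ : AddAut A)) a + (n : ℤ) • (n • (σ : AddAut A)) a)
          = (σ (∑ i ∈ Finset.range n, (i : ℤ) • (i • (σ : AddAut A)) a)
              - ∑ i ∈ Finset.range n, (i : ℤ) • (i • (σ : AddAut A)) a)
            + (n : ℤ) • ((n + 1) • (σ : AddAut A)) a - (n : ℤ) • (n • (σ : AddAut A)) a := by abel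
        _ = ((n : ℤ) - 1) • (n • (σ : AddAut A)) a + a - (∑ i ∈ Finset.range n, (i • (σ : AddAut A)) a)
            + (n : ℤ) • ((n + 1) • (σ : AddAut A)) a - (n : ℤ) • (n • (σ : AddAut A)) a := by rw [ih]
        _ = (n : ℤ) • ((n + 1) • (σ : AddAut A)) a + a
            - (∑ i ∈ Finset.range n, (i • (σ : AddAut A)) a + (n • (σ : AddAut A)) a) := by
              rw [hrw]; abel

end Selmer9

open Selmer9

theorem selmer_stmt_9 {p : ℕ} (hp : p.Prime) {A R : Type*} [AddCommGroup A]
    [AddCommGroup R]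
    (σ : A ≃+ A) (hσ : p • (σ : AddAut A) = 0)
    (red : A →+ R) (hsurj : Function.Surjective red)
    (htriv : ∀ x, red (σ x) = red x)
    (hdiv : Function.Bijective fun x : red.ker => p • x) :
    Nat.card (H1 σ p (⊤ : AddSubgroup A)) = Nat.card {z : R // p • z = 0} := by
  classical
  -- unique p-divisibility of the kernel, at the level of A
  have hker : ∀ a : A, red a = 0 → p • a = 0 → a = 0 := by
    intro a ha hpa
    have h0 : (⟨a, ha⟩ : red.ker) = 0 := by
      apply hdiv.1
      ext
      simpa using hpa
    simpa using congrArg Subtype.val h0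
  have hdivK : ∀ a : A, red a = 0 → ∃ c, red c = 0 ∧ p • c = a := by
    intro a ha
    obtain ⟨c, hc⟩ := hdiv.2 ⟨a, ha⟩
    exact ⟨c.1, c.2, by simpa using congrArg Subtype.val hc⟩
  -- red of powers
  have red_pow : ∀ (i : ℕ) (a : A), red ((i • (σ : AddAut A)) a) = red a := by
    intro i a
    induction i with
    | zero => rfl
    | succ n ih => rw [pow_succ_apply, htriv, ih]
  have red_cnorm : ∀ a : A, red (cnorm σ p a) = p • red a := by
    intro a
    simp [cnorm, map_sum, red_pow]
  -- every norm-zero element of the kernel is a coboundary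
  have cobound : ∀ d : A, red d = 0 → cnorm σ p d = 0 → ∃ b : A, σ b - b = d := by
    intro d hd hNd
    obtain ⟨c, hc0, hcp⟩ := hdivK d hd
    have hNc : cnorm σ p c = 0 := by
      apply hker
      · rw [red_cnorm, hc0, smul_zero]
      · rw [← cnorm_nsmul, hcp, hNd]
    refine ⟨∑ i ∈ Finset.range p, (i : ℤ) • (i • (σ : AddAut A)) c, ?_⟩
    have hk := key σ c p
    have h4 : (p • (σ : AddAut A)) c = c := by rw [hσ]; rfl
    rw [hNc, h4] at hk
    rw [hk, sub_smul, one_smul]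
    have : ((p : ℤ)) • c = p • c := by exact natCast_zsmul c p
    rw [sub_zero, ← hcp, ← this]
    abel
  -- the map on cocycles
  have hmem : ∀ x : Z1 σ p (⊤ : AddSubgroup A), p • red x.1 = 0 := by
    intro x
    rw [← red_cnorm, x.2.2, map_zero]
  let F : H1 σ p (⊤ : AddSubgroup A) → {z : R // p • z = 0} :=
    Quot.lift (fun x => ⟨red x.1, hmem x⟩) (by
      rintro x y ⟨b, -, hb⟩
      have : red x.1 - red y.1 = 0 := by
        rw [← map_sub, hb, map_sub, htriv, sub_self]
      ext
      exact sub_eq_zero.1 this)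
  have hFbij : Function.Bijective F := by
    constructor
    · rintro ⟨x⟩ ⟨y⟩ h
      have hxy : red x.1 = red y.1 := by
        simpa [F] using congrArg Subtype.val h
      have hd : red (x.1 - y.1) = 0 := by rw [map_sub, hxy, sub_self]
      have hNd : cnorm σ p (x.1 - y.1) = 0 := by
        rw [cnorm_sub, x.2.2, y.2.2, sub_self]
      obtain ⟨b, hb⟩ := cobound _ hd hNd
      exact Quot.sound ⟨b, AddSubgroup.mem_top b, hb.symm⟩
    · rintro ⟨z, hz⟩
      obtain ⟨a, ha⟩ := hsurj z
      have h1 : red (cnorm σ p a) = 0 := by rw [red_cnorm, ha, hz]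
      obtain ⟨c, hc0, hcp⟩ := hdivK _ h1
      have hNc : cnorm σ p c = cnorm σ p a := by
        have h2 : red (cnorm σ p c - cnorm σ p a) = 0 := by
          rw [map_sub, red_cnorm, hc0, smul_zero, h1, sub_zero]
        have h3 : p • (cnorm σ p c - cnorm σ p a) = 0 := by
          rw [smul_sub, ← cnorm_nsmul, hcp,
            cnorm_fixed σ p (sigma_cnorm σ hσ a), sub_self]
        have := hker _ h2 h3
        exact sub_eq_zero.1 this
      refine ⟨Quot.mk _ ⟨a - c, AddSubgroup.mem_top _, ?_⟩, ?_⟩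
      · rw [cnorm_sub, hNc, sub_self]
      · apply Subtype.ext
        simp only [F]
        show red (a - c) = z
        rw [map_sub, hc0, sub_zero, ha]
  exact Nat.card_eq_of_bijective F hFbij
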